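/- Let n ∈ ℕ with n ≥ 2, let 1 ≤ k ≤ n, let p* ∈ [0,1] be a maximizer of ψ_{n,k} on [0,1], let β ∈ (0,1], and set t := max(p*, β). Then the probability measure P := (1 - β/t) δ_0 + (β/t) δ_t on [0,1] has mean β and satisfies ∫_{[0,1]} B_{n,s}({k,…,n}) dP(s) = f_{n,k}(β). -/

import Mathlib

open MeasureTheory

/-- Binomial upper tail `B_{n,p}({k,…,n})`. -/
noncomputable def binTail (n k : ℕ) (p : ℝ) : ℝ :=
  ∑ j ∈ Finset.Icc k n, (n.choose j : ℝ) * p ^ j * (1 - p) ^ (n - j)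

/-- `ψ_{n,k}(p) = p⁻¹ B_{n,p}({k,…,n})`, extended continuously at `0`. -/
noncomputable def psi (n k : ℕ) (p : ℝ) : ℝ :=
  if p = 0 then (if k = 1 then (n : ℝ) else 0) else p⁻¹ * binTail n k p

/-- `f_{n,k}(u) = u ⋅ sup_{p ∈ [u,1]} ψ_{n,k}(p)`. -/
noncomputable def fnk (n k : ℕ) (u : ℝ) : ℝ := u * sSup (psi n k '' Set.Icc u 1)

open Polynomial

lemma psi_ne {n k : ℕ} {p : ℝ} (hp : p ≠ 0) : psi n k p = p⁻¹ * binTail n k p := if_neg hp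

lemma binTail_eval (n k : ℕ) (p : ℝ) :
    binTail n k p = (∑ j ∈ Finset.Icc k n, bernsteinPolynomial ℝ n j).eval p := by
  simp [binTail, bernsteinPolynomial, mul_assoc, Polynomial.eval_finset_sum]

lemma telescope (g : ℕ → ℝ[X]) (a b : ℕ) (hab : a ≤ b) :
    ∑ i ∈ Finset.Icc a b, (g i - g (i+1)) = g a - g (b+1) := by
  induction b with
  | zero => interval_cases a; simp
  | succ b ih =>
    rcases Nat.lt_or_ge a (b+1) with h | h
    · rw [Finset.sum_Icc_succ_top (by omega), ih (by omega)]; ring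
    · have : a = b + 1 := by omega
      subst this; simp

lemma deriv_sum_bern (n k : ℕ) (hk1 : 1 ≤ k) (hkn : k ≤ n) :
    Polynomial.derivative (∑ j ∈ Finset.Icc k n, bernsteinPolynomial ℝ n j)
      = (n : ℝ[X]) * bernsteinPolynomial ℝ (n-1) (k-1) := by
  rw [map_sum]
  have h1 : ∀ j ∈ Finset.Icc k n, Polynomial.derivative (bernsteinPolynomial ℝ n j)
      = (n : ℝ[X]) * (bernsteinPolynomial ℝ (n-1) (j-1) - bernsteinPolynomial ℝ (n-1) j) := by
    intro j hj
    simp only [Finset.mem_Icc] at hj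
    obtain ⟨i, rfl⟩ : ∃ i, j = i + 1 := ⟨j - 1, by omega⟩
    rw [bernsteinPolynomial.derivative_succ]
    simp
  rw [Finset.sum_congr rfl h1, ← Finset.mul_sum]
  have h2 : ∑ j ∈ Finset.Icc k n, (bernsteinPolynomial ℝ (n-1) (j-1) - bernsteinPolynomial ℝ (n-1) j)
      = ∑ i ∈ Finset.Icc (k-1) (n-1), (bernsteinPolynomial ℝ (n-1) i - bernsteinPolynomial ℝ (n-1) (i+1)) := by
    apply Finset.sum_nbij' (fun j => j - 1) (fun i => i + 1) <;>
      simp only [Finset.mem_Icc] <;> intros <;> first | omega |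
        (congr 1 <;> congr 1 <;> omega)
  rw [h2, telescope _ _ _ (by omega)]
  have : bernsteinPolynomial ℝ (n-1) (n-1+1) = 0 :=
    bernsteinPolynomial.eq_zero_of_lt _ (by omega)
  rw [this, sub_zero]

lemma hasDerivAt_binTail (n k : ℕ) (hk1 : 1 ≤ k) (hkn : k ≤ n) (p : ℝ) :
    HasDerivAt (binTail n k)
      ((n : ℝ) * ((n-1).choose (k-1) : ℝ) * (p^(k-1) * (1-p)^(n-k))) p := by
  have hd := (∑ j ∈ Finset.Icc k n, bernsteinPolynomial ℝ n j).hasDerivAt p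
  have he : binTail n k = fun q => (∑ j ∈ Finset.Icc k n, bernsteinPolynomial ℝ n j).eval q := by
    funext q; exact binTail_eval n k q
  rw [← he] at hd
  refine hd.congr_deriv ?_
  rw [deriv_sum_bern n k hk1 hkn]
  have : n - 1 - (k - 1) = n - k := by omega
  simp [bernsteinPolynomial, this, mul_assoc]

lemma binTail_zero {n k : ℕ} (hk : 1 ≤ k) : binTail n k 0 = 0 := by
  apply Finset.sum_eq_zero
  intro j hj
  simp only [Finset.mem_Icc] at hj
  rw [zero_pow (by omega)]
  ring

lemma binTail_one {n k : ℕ} (hkn : k ≤ n) : binTail n k 1 = 1 := by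
  rw [binTail, Finset.sum_eq_single n]
  · simp
  · intro j hj hjn
    simp only [Finset.mem_Icc] at hj
    rw [sub_self, zero_pow (by omega)]
    ring
  · intro hn
    simp only [Finset.mem_Icc] at hn
    omega

lemma binTail_nonneg {n k : ℕ} {p : ℝ} (h0 : 0 ≤ p) (h1 : p ≤ 1) : 0 ≤ binTail n k p := by
  apply Finset.sum_nonneg
  intro j hj
  have : (0:ℝ) ≤ 1 - p := by linarith
  positivity

lemma psi_one {n k : ℕ} (hkn : k ≤ n) : psi n k 1 = 1 := by
  rw [psi_ne one_ne_zero, binTail_one hkn]; norm_num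

lemma binTail_lower {n k : ℕ} (hkn : k ≤ n) {p : ℝ} (h0 : 0 ≤ p) (h1 : p ≤ 1) :
    p ^ n ≤ binTail n k p := by
  have := Finset.single_le_sum (f := fun j => (n.choose j : ℝ) * p ^ j * (1 - p) ^ (n - j))
    (fun j hj => by
      have : (0:ℝ) ≤ 1 - p := by linarith
      positivity)
    (Finset.mem_Icc.mpr ⟨hkn, le_refl n⟩)
  simpa [binTail] using this

lemma psi_lower {n k : ℕ} (hkn : k ≤ n) {p : ℝ} (h0 : 0 < p) (h1 : p ≤ 1) :
    p ^ (n - 1) ≤ psi n k p := by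
  rw [psi_ne h0.ne']
  rcases Nat.eq_zero_or_pos n with rfl | hn
  · rcases Nat.le_zero.mp hkn with rfl
    simp [binTail]
    exact (one_le_inv₀ h0).mpr h1
  · have h2 : p * p ^ (n-1) = p ^ n := by
      rw [← pow_succ']
      congr 1
      omega
    rw [le_inv_mul_iff₀ h0, h2]
    exact binTail_lower hkn h0.le h1

lemma continuous_binTail (n k : ℕ) : Continuous (binTail n k) := by
  have : binTail n k = fun p => (∑ j ∈ Finset.Icc k n, bernsteinPolynomial ℝ n j).eval p := by
    funext p; exact binTail_eval n k p
  rw [this]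
  exact Polynomial.continuous _

lemma continuousOn_psi (n k : ℕ) {s : Set ℝ} (hs : (0:ℝ) ∉ s) : ContinuousOn (psi n k) s := by
  have h1 : ContinuousOn (fun p : ℝ => p⁻¹ * binTail n k p) s :=
    (continuousOn_id.inv₀ (fun x hx => by rintro rfl; exact hs hx)).mul
      (continuous_binTail n k).continuousOn
  exact h1.congr (fun p hp => psi_ne (by rintro rfl; exact hs hp))

lemma psi_k1 {n : ℕ} {p : ℝ} (hp : p ≠ 0) :
    psi n 1 p = ∑ i ∈ Finset.range n, (1 - p) ^ i := by
  rw [psi_ne hp]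
  have hgeom : p * ∑ i ∈ Finset.range n, (1-p)^i = 1 - (1-p)^n := by
    have := geom_sum_mul (1-p) n
    have h2 : (1 - p - 1) = -p := by ring
    rw [h2] at this
    linarith [this]
  have hbin : binTail n 1 p = 1 - (1-p)^n := by
    have hpow := add_pow p (1-p) n
    have hps : p + (1-p) = 1 := by ring
    rw [hps, one_pow] at hpow
    have hsplit : (Finset.range (n+1)).erase 0 = Finset.Icc 1 n := by
      ext j; simp only [Finset.mem_erase, Finset.mem_range, Finset.mem_Icc]; omega
    have := Finset.add_sum_erase (Finset.range (n+1))
      (fun j => p ^ j * (1-p) ^ (n - j) * (n.choose j : ℝ)) (a := 0) (Finset.mem_range.mpr (by omega))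
    rw [hsplit] at this
    rw [← hpow] at this
    simp only [pow_zero, Nat.sub_zero, Nat.choose_zero_right, Nat.cast_one, one_mul, mul_one] at this
    rw [binTail]
    have : ∑ j ∈ Finset.Icc 1 n, p ^ j * (1-p) ^ (n - j) * (n.choose j : ℝ) = 1 - (1-p)^n := by
      linarith [this]
    rw [← this]
    apply Finset.sum_congr rfl
    intro j hj; ring
  rw [hbin, ← hgeom, inv_mul_cancel_left₀ hp]

lemma binTail_nn {n : ℕ} (p : ℝ) : binTail n n p = p ^ n := by
  rw [binTail, Finset.Icc_self, Finset.sum_singleton]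
  simp

lemma quasiconcave (e1 e2 : ℕ) {x m z : ℝ} (hx : 0 < x) (hxm : x < m) (hmz : m < z) (hz : z < 1) :
    min (x^e1 * (1-x)^e2) (z^e1 * (1-z)^e2) ≤ m^e1 * (1-m)^e2 := by
  set w1 := (z-m)/(z-x) with hw1
  set w2 := (m-x)/(z-x) with hw2
  have hzx : 0 < z - x := by linarith
  have hw1p : 0 < w1 := div_pos (by linarith) hzx
  have hw2p : 0 < w2 := div_pos (by linarith) hzx
  have hsum : w1 + w2 = 1 := by rw [hw1, hw2, ← add_div]; field_simp; ring
  have hm : 0 < m := lt_trans hx hxm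
  have hz1 : 0 < 1 - z := by linarith
  have hm1 : 0 < 1 - m := by linarith
  have hx1 : 0 < 1 - x := by linarith
  have hzp : 0 < z := lt_trans hm hmz
  have hgx : x ^ w1 * z ^ w2 ≤ m := by
    have := Real.geom_mean_le_arith_mean2_weighted hw1p.le hw2p.le hx.le hzp.le hsum
    have heq : w1 * x + w2 * z = m := by rw [hw1, hw2]; field_simp; ring
    linarith [this]
  have hgy : (1-x) ^ w1 * (1-z) ^ w2 ≤ 1 - m := by
    have := Real.geom_mean_le_arith_mean2_weighted hw1p.le hw2p.le hx1.le hz1.le hsum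
    have heq : w1 * (1-x) + w2 * (1-z) = 1 - m := by rw [hw1, hw2]; field_simp; ring
    linarith [this]
  set u := x^e1 * (1-x)^e2 with hu
  set v := z^e1 * (1-z)^e2 with hv
  have hup : 0 < u := by positivity
  have hvp : 0 < v := by positivity
  have hminp : 0 < min u v := lt_min hup hvp
  calc min u v = (min u v) ^ w1 * (min u v) ^ w2 := by
        rw [← Real.rpow_add hminp, hsum, Real.rpow_one]
    _ ≤ u ^ w1 * v ^ w2 := by
        apply mul_le_mul (Real.rpow_le_rpow hminp.le (min_le_left u v) hw1p.le)
          (Real.rpow_le_rpow hminp.le (min_le_right u v) hw2p.le)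
          (Real.rpow_nonneg hminp.le _) (Real.rpow_nonneg hup.le _)
    _ = (x ^ w1 * z ^ w2) ^ e1 * ((1-x) ^ w1 * (1-z) ^ w2) ^ e2 := by
        rw [hu, hv]
        rw [Real.mul_rpow (by positivity) (by positivity),
            Real.mul_rpow (by positivity) (by positivity)]
        rw [mul_pow, mul_pow]
        rw [← Real.rpow_natCast x e1, ← Real.rpow_natCast z e1,
            ← Real.rpow_natCast (1-x) e2, ← Real.rpow_natCast (1-z) e2]
        rw [← Real.rpow_natCast (x ^ w1) e1, ← Real.rpow_natCast (z ^ w2) e1,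
            ← Real.rpow_natCast ((1-x) ^ w1) e2, ← Real.rpow_natCast ((1-z) ^ w2) e2]
        rw [← Real.rpow_mul hx.le, ← Real.rpow_mul hzp.le,
            ← Real.rpow_mul hx1.le, ← Real.rpow_mul hz1.le,
            ← Real.rpow_mul hx.le, ← Real.rpow_mul hzp.le,
            ← Real.rpow_mul hx1.le, ← Real.rpow_mul hz1.le]
        rw [mul_comm w1 (e1:ℝ), mul_comm w2 (e1:ℝ), mul_comm w1 (e2:ℝ), mul_comm w2 (e2:ℝ)]
        ring
    _ ≤ m ^ e1 * (1-m) ^ e2 := by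
        apply mul_le_mul (pow_le_pow_left₀ (by positivity) hgx e1)
          (pow_le_pow_left₀ (by positivity) hgy e2) (by positivity) (by positivity)

lemma hasDerivAt_psi (n k : ℕ) (hk1 : 1 ≤ k) (hkn : k ≤ n) {p : ℝ} (hp : p ≠ 0) :
    HasDerivAt (psi n k)
      (p⁻¹ * ((n : ℝ) * ((n-1).choose (k-1) : ℝ) * (p^(k-1) * (1-p)^(n-k)) - psi n k p)) p := by
  have hB := hasDerivAt_binTail n k hk1 hkn p
  have hinv := hasDerivAt_inv hp
  have hmul := hinv.mul hB
  have hee : psi n k =ᶠ[nhds p] fun q => q⁻¹ * binTail n k q := by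
    filter_upwards [isOpen_compl_singleton.mem_nhds (by simpa using hp)] with q hq
    exact psi_ne hq
  have := hmul.congr_of_eventuallyEq hee
  refine this.congr_deriv ?_
  rw [psi_ne hp]
  field_simp
  ring
lemma psi_anti_right (n k : ℕ) (hn : 2 ≤ n) (hk1 : 1 ≤ k) (hkn : k ≤ n)
    (pstar : ℝ) (hps0 : 0 ≤ pstar) (hps1 : pstar ≤ 1)
    (hmax : ∀ p ∈ Set.Icc (0:ℝ) 1, psi n k p ≤ psi n k pstar)
    {β q : ℝ} (hβ0 : 0 < β) (hpβ : pstar ≤ β) (hβq : β ≤ q) (hq1 : q ≤ 1) :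
    psi n k q ≤ psi n k β := by
  by_cases hk : k = 1
  · subst hk
    rw [psi_k1 hβ0.ne', psi_k1 (by linarith : (0:ℝ) < q).ne']
    apply Finset.sum_le_sum
    intro i _
    exact pow_le_pow_left₀ (by linarith) (by linarith) i
  have hk2 : 2 ≤ k := by omega
  have hψzero : psi n k 0 = 0 := by norm_num [psi, hk]
  by_cases hkn' : k = n
  · have hψ1 : psi n k 1 = 1 := psi_one hkn
    have hψps : 1 ≤ psi n k pstar := hψ1 ▸ hmax 1 ⟨zero_le_one, le_refl 1⟩
    have hps_pos : 0 < pstar := by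
      rcases eq_or_lt_of_le hps0 with h | h
      · exfalso
        rw [← h, hψzero] at hψps
        linarith
      · exact h
    have hpse : psi n k pstar = pstar ^ (n-1) := by
      rw [psi_ne hps_pos.ne', hkn', binTail_nn]
      have hns : pstar ^ n = pstar * pstar ^ (n-1) := by
        rw [← pow_succ']
        congr 1
        omega
      rw [hns, inv_mul_cancel_left₀ hps_pos.ne']
    have hps_eq1 : pstar = 1 := by
      by_contra h
      have hlt : pstar < 1 := lt_of_le_of_ne hps1 h
      have := pow_lt_one₀ hps0 hlt (show n - 1 ≠ 0 by omega)
      rw [hpse] at hψps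
      linarith
    have hβ1 : β = 1 := le_antisymm (le_trans hβq hq1) (hps_eq1 ▸ hpβ)
    have hq1' : q = 1 := le_antisymm hq1 (hβ1 ▸ hβq)
    rw [hβ1, hq1']
  have hknlt : k < n := lt_of_le_of_ne hkn hkn'
  rcases eq_or_lt_of_le hβq with rfl | hβq'
  · exact le_refl _
  by_contra hle
  push_neg at hle
  have hβ1 : β < 1 := lt_of_lt_of_le hβq' hq1
  have hψpsβ : psi n k β < psi n k pstar :=
    lt_of_lt_of_le hle (hmax q ⟨by linarith, hq1⟩)
  have hψ1 : psi n k 1 = 1 := psi_one hkn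
  have hps_pos : 0 < pstar := by
    rcases eq_or_lt_of_le hps0 with h | h
    · exfalso
      have h1 := hψ1 ▸ hmax 1 ⟨zero_le_one, le_refl 1⟩
      rw [← h, hψzero] at h1
      linarith
    · exact h
  have hpsβ' : pstar < β := lt_of_le_of_ne hpβ (by rintro rfl; exact lt_irrefl _ hψpsβ)
  have hps1' : pstar < 1 := lt_trans hpsβ' hβ1
  set A : ℝ := (n : ℝ) * (((n:ℕ)-1).choose (k-1) : ℝ) with hA
  have hchoose : 0 < ((n:ℕ)-1).choose (k-1) := Nat.choose_pos (by omega)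
  have hApos : 0 < A := by
    rw [hA]
    have : (0:ℝ) < n := by positivity
    exact mul_pos this (by exact_mod_cast hchoose)
  set hf : ℝ → ℝ := fun p => A * (p ^ (k-1) * (1-p)^(n-k)) with hhf
  have hD : ∀ p : ℝ, p ≠ 0 → HasDerivAt (psi n k) (p⁻¹ * (hf p - psi n k p)) p :=
    fun p hp => hasDerivAt_psi n k hk1 hkn hp
  -- first-order condition at pstar
  have hloc : IsLocalMax (psi n k) pstar := by
    have hnb : Set.Icc (0:ℝ) 1 ∈ nhds pstar := Icc_mem_nhds hps_pos hps1'
    exact Filter.eventually_of_mem hnb hmax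
  have hfo : ∀ x : ℝ, 0 < x → deriv (psi n k) x = 0 → hf x = psi n k x := by
    intro x hx hd
    have := (hD x hx.ne').deriv
    rw [hd] at this
    rcases mul_eq_zero.mp this.symm with h | h
    · exact absurd h (inv_ne_zero hx.ne')
    · linarith
  have hps_eq : hf pstar = psi n k pstar := hfo pstar hps_pos hloc.deriv_eq_zero
  -- maximizer on [β, 1]
  have hcont : ContinuousOn (psi n k) (Set.Icc β 1) :=
    continuousOn_psi n k (fun h => absurd h.1 (by linarith))
  obtain ⟨qs, hqs_mem, hqs_max⟩ := isCompact_Icc.exists_isMaxOn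
    (Set.nonempty_Icc.mpr hβ1.le) hcont
  have hqsq : psi n k q ≤ psi n k qs := hqs_max ⟨hβq'.le, hq1⟩
  have hβqs : psi n k β < psi n k qs := lt_of_lt_of_le hle hqsq
  have hqs_gt : β < qs := lt_of_le_of_ne hqs_mem.1 (by rintro rfl; exact lt_irrefl _ hβqs)
  have hqs0 : 0 < qs := lt_trans hβ0 hqs_gt
  -- qs < 1
  have hqs1 : qs < 1 := by
    by_contra h
    push_neg at h
    have hqse : qs = 1 := le_antisymm hqs_mem.2 h
    -- find c with A(1-c) < c^(n-1), β < c < 1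
    have hG : ∀ᶠ p in nhds (1:ℝ), A * (1-p) < p ^ (n-1) := by
      have hcontG : ContinuousAt (fun p : ℝ => p^(n-1) - A*(1-p)) 1 := by fun_prop
      have h1 : (fun p : ℝ => p^(n-1) - A*(1-p)) 1 = 1 := by simp
      have h2 := hcontG.tendsto
      norm_num at h2
      filter_upwards [h2.eventually (eventually_gt_nhds (show (0:ℝ) < 1 by norm_num))] with p hp
      linarith
    have hev2 : Set.Ioo β 1 ∈ nhdsWithin (1:ℝ) (Set.Iio 1) :=
      Ioo_mem_nhdsLT_of_mem ⟨hβ1, le_refl 1⟩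
    obtain ⟨c, hcG, hc_mem⟩ :=
      ((hG.filter_mono nhdsWithin_le_nhds).and (Filter.eventually_of_mem hev2 (fun x hx => hx))).exists
    have hc0 : 0 < c := lt_trans hβ0 hc_mem.1
    have hanti : StrictAntiOn (psi n k) (Set.Icc c 1) := by
      apply strictAntiOn_of_deriv_neg (convex_Icc c 1)
        (continuousOn_psi n k (fun h => absurd h.1 (by linarith)))
      intro p hp
      rw [interior_Icc] at hp
      have hp0 : 0 < p := lt_trans hc0 hp.1
      have hp1 : p < 1 := hp.2
      rw [(hD p hp0.ne').deriv]
      apply mul_neg_of_pos_of_neg (inv_pos.mpr hp0)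
      rw [sub_neg]
      have hb1 : hf p ≤ A * (1-p) := by
        rw [hhf]
        apply mul_le_mul_of_nonneg_left _ hApos.le
        calc p ^ (k-1) * (1-p)^(n-k) ≤ 1 * (1-p)^1 := by
              apply mul_le_mul (pow_le_one₀ hp0.le hp1.le)
                (pow_le_pow_of_le_one (by linarith) (by linarith) (by omega))
                (pow_nonneg (by linarith : (0:ℝ) ≤ 1 - p) _) zero_le_one
          _ = 1 - p := by ring
      have hb2 : A * (1-p) < A * (1-c) := by
        apply mul_lt_mul_of_pos_left _ hApos
        linarith [hp.1]
      have hb3 : A * (1-c) < c ^ (n-1) := hcG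
      have hb4 : c ^ (n-1) ≤ p ^ (n-1) := pow_le_pow_left₀ hc0.le hp.1.le _
      have hb5 : p ^ (n-1) ≤ psi n k p := psi_lower hkn hp0 hp1.le
      linarith
    set mid := (c+1)/2 with hmid
    have hmidc : c < mid := by rw [hmid]; linarith [hc_mem.2]
    have hmid1 : mid < 1 := by rw [hmid]; linarith [hc_mem.2]
    have h1lt : psi n k 1 < psi n k mid :=
      hanti ⟨hmidc.le, hmid1.le⟩ ⟨hc_mem.2.le, le_refl 1⟩ hmid1
    have hmidβ : psi n k mid ≤ psi n k qs :=
      hqs_max ⟨by linarith [hc_mem.1], hmid1.le⟩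
    rw [hqse] at hmidβ
    linarith
  -- first-order condition at qs
  have hlocq : IsLocalMax (psi n k) qs := hqs_max.isLocalMax (Icc_mem_nhds hqs_gt hqs1)
  have hqs_eq : hf qs = psi n k qs := hfo qs hqs0 hlocq.deriv_eq_zero
  -- minimizer on [pstar, qs]
  have hcont2 : ContinuousOn (psi n k) (Set.Icc pstar qs) :=
    continuousOn_psi n k (fun h => absurd h.1 (by linarith))
  obtain ⟨m, hm_mem, hm_min⟩ := isCompact_Icc.exists_isMinOn
    (Set.nonempty_Icc.mpr (by linarith)) hcont2
  have hmβ : psi n k m ≤ psi n k β := hm_min ⟨hpβ, hqs_gt.le⟩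
  have hm_lt_ps : psi n k m < psi n k pstar := lt_of_le_of_lt hmβ hψpsβ
  have hm_lt_qs : psi n k m < psi n k qs := lt_of_le_of_lt hmβ hβqs
  have hm1 : pstar < m := lt_of_le_of_ne hm_mem.1 (by rintro rfl; exact lt_irrefl _ hm_lt_ps)
  have hm2 : m < qs := lt_of_le_of_ne hm_mem.2 (by rintro rfl; exact lt_irrefl _ hm_lt_qs)
  have hm0 : 0 < m := lt_trans hps_pos hm1
  have hlocm : IsLocalMin (psi n k) m := hm_min.isLocalMin (Icc_mem_nhds hm1 hm2)
  have hm_eq : hf m = psi n k m := hfo m hm0 hlocm.deriv_eq_zero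
  -- contradiction via quasiconcavity
  have hquasi := quasiconcave (k-1) (n-k) hps_pos hm1 hm2 hqs1
  have hf_min : min (hf pstar) (hf qs) ≤ hf m := by
    rw [hhf]
    simp only
    rw [← mul_min_of_nonneg _ _ hApos.le]
    exact mul_le_mul_of_nonneg_left hquasi hApos.le
  rw [hps_eq, hqs_eq, hm_eq] at hf_min
  have : psi n k m < min (psi n k pstar) (psi n k qs) := lt_min hm_lt_ps hm_lt_qs
  linarith
lemma integrable_dirac' (f : ℝ → ℝ) (a : ℝ) : MeasureTheory.Integrable f (MeasureTheory.Measure.dirac a) := by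
  have hae : f =ᵐ[MeasureTheory.Measure.dirac a] (fun _ => f a) := by
    rw [MeasureTheory.ae_dirac_eq]
    exact Filter.eventually_pure.mpr rfl
  exact (MeasureTheory.integrable_const (f a)).congr hae.symm

/-- For `n ≥ 2`, a maximizer `p*` of `ψ_{n,k}`, `β ∈ (0,1]` and `t := max(p*, β)`,
the two-point measure `(1 - β/t) δ₀ + (β/t) δ_t` is a probability measure with mean `β`
whose integral of the binomial tail equals `f_{n,k}(β)`. -/
theorem two_point_attains_fnk (n k : ℕ) (hn : 2 ≤ n) (hk1 : 1 ≤ k) (hkn : k ≤ n)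
    (pstar : ℝ) (hpstar : pstar ∈ Set.Icc (0:ℝ) 1)
    (hmax : ∀ p ∈ Set.Icc (0:ℝ) 1, psi n k p ≤ psi n k pstar)
    (β : ℝ) (hβ : β ∈ Set.Ioc (0:ℝ) 1) :
    IsProbabilityMeasure
      (ENNReal.ofReal (1 - β / max pstar β) • Measure.dirac (0:ℝ)
        + ENNReal.ofReal (β / max pstar β) • Measure.dirac (max pstar β)) ∧
    (∫ s, s ∂(ENNReal.ofReal (1 - β / max pstar β) • Measure.dirac (0:ℝ)
        + ENNReal.ofReal (β / max pstar β) • Measure.dirac (max pstar β))) = β ∧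
    (∫ s, binTail n k s ∂(ENNReal.ofReal (1 - β / max pstar β) • Measure.dirac (0:ℝ)
        + ENNReal.ofReal (β / max pstar β) • Measure.dirac (max pstar β))) = fnk n k β := by
  obtain ⟨hβ0, hβ1⟩ := hβ
  have htβ : β ≤ max pstar β := le_max_right _ _
  have ht0 : 0 < max pstar β := lt_of_lt_of_le hβ0 htβ
  have ht1 : max pstar β ≤ 1 := max_le hpstar.2 hβ1
  have hbt0 : 0 ≤ β / max pstar β := by positivity
  have hbt1 : β / max pstar β ≤ 1 := (div_le_one ht0).mpr htβ
  have h1bt : 0 ≤ 1 - β / max pstar β := by linarith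
  have hsup : sSup (psi n k '' Set.Icc β 1) = psi n k (max pstar β) := by
    apply IsGreatest.csSup_eq
    constructor
    · exact ⟨max pstar β, ⟨htβ, ht1⟩, rfl⟩
    · rintro y ⟨p, hp, rfl⟩
      rcases le_total pstar β with hcase | hcase
      · rw [max_eq_right hcase]
        exact psi_anti_right n k hn hk1 hkn pstar hpstar.1 hpstar.2 hmax hβ0 hcase hp.1 hp.2
      · rw [max_eq_left hcase]
        exact hmax p ⟨le_trans hβ0.le hp.1, hp.2⟩
  have key : ∀ f : ℝ → ℝ,
      (∫ s, f s ∂(ENNReal.ofReal (1 - β / max pstar β) • Measure.dirac (0:ℝ)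
        + ENNReal.ofReal (β / max pstar β) • Measure.dirac (max pstar β)))
      = (1 - β / max pstar β) * f 0 + (β / max pstar β) * f (max pstar β) := by
    intro f
    rw [MeasureTheory.integral_add_measure
        ((integrable_dirac' f 0).smul_measure ENNReal.ofReal_ne_top)
        ((integrable_dirac' f (max pstar β)).smul_measure ENNReal.ofReal_ne_top),
      MeasureTheory.integral_smul_measure, MeasureTheory.integral_smul_measure,
      MeasureTheory.integral_dirac, MeasureTheory.integral_dirac,
      ENNReal.toReal_ofReal h1bt, ENNReal.toReal_ofReal hbt0]
    simp [smul_eq_mul]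
  refine ⟨?_, ?_, ?_⟩
  · constructor
    simp only [Measure.add_apply, Measure.smul_apply, smul_eq_mul, measure_univ, mul_one]
    rw [← ENNReal.ofReal_add h1bt hbt0]
    norm_num
  · rw [key (fun s => s)]
    simp only [mul_zero, zero_add]
    exact div_mul_cancel₀ β ht0.ne'
  · rw [key (binTail n k), binTail_zero hk1, fnk, hsup, psi_ne ht0.ne']
    field_simp
    ring
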